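/- If f : [0,1] → ℝ is bounded and twice differentiable at a point x ∈ [0,1], then n·(B_n(f, x) − f(x)) tends to x(1−x)·f''(x)/2 as n → ∞, where B_n(f, x) = Σ_{i=0}^n C(n,i) f(i/n) x^i (1−x)^{n−i} is the n-th Bernstein polynomial of f at x. -/

import Mathlib

open Filter Set

lemma binom_sum (m : ℕ) (x : ℝ) :
    ∑ j ∈ Finset.range (m+1), (m.choose j : ℝ) * x^j * (1-x)^(m-j) = 1 := by
  have h := add_pow x (1-x) m
  simp only [add_sub_cancel, one_pow] at h
  rw [show ∑ j ∈ Finset.range (m+1), (m.choose j : ℝ) * x^j * (1-x)^(m-j)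
      = ∑ j ∈ Finset.range (m+1), x^j * (1-x)^(m-j) * (m.choose j : ℝ) from
    Finset.sum_congr rfl fun j _ => by ring, ← h]

lemma choose_descFact {n i r : ℕ} (hri : r ≤ i) (hin : i ≤ n) :
    n.choose i * i.descFactorial r = n.descFactorial r * (n-r).choose (i-r) := by
  have h1 : 0 < Nat.factorial (i - r) * Nat.factorial (n - i) := by positivity
  apply Nat.eq_of_mul_eq_mul_right h1
  have e1 : n.choose i * i.descFactorial r * (Nat.factorial (i-r) * Nat.factorial (n-i))
      = Nat.factorial n := by
    rw [show n.choose i * i.descFactorial r * (Nat.factorial (i-r) * Nat.factorial (n-i)) =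
      n.choose i * (Nat.factorial (i-r) * i.descFactorial r) * Nat.factorial (n-i) by ring,
      Nat.factorial_mul_descFactorial hri, Nat.choose_mul_factorial_mul_factorial hin]
  have e2 : n.descFactorial r * (n-r).choose (i-r) * (Nat.factorial (i-r) * Nat.factorial (n-i))
      = Nat.factorial n := by
    have hsub : n - r - (i - r) = n - i := by omega
    rw [show n.descFactorial r * (n-r).choose (i-r) * (Nat.factorial (i-r) * Nat.factorial (n-i)) =
      ((n-r).choose (i-r) * Nat.factorial (i-r) * Nat.factorial (n - i)) * n.descFactorial r by
        ring, ← hsub,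
      Nat.choose_mul_factorial_mul_factorial (by omega : i - r ≤ n - r),
      Nat.factorial_mul_descFactorial (by omega : r ≤ n)]
  rw [e1, e2]

lemma fall_moment (n r : ℕ) (x : ℝ) :
    ∑ i ∈ Finset.range (n+1), (n.choose i : ℝ) * x^i * (1-x)^(n-i) * (i.descFactorial r : ℝ)
      = (n.descFactorial r : ℝ) * x^r := by
  rcases lt_or_ge n r with h | h
  · rw [Nat.descFactorial_eq_zero_iff_lt.2 h, Nat.cast_zero, zero_mul]
    apply Finset.sum_eq_zero
    intro i hi
    have hi' := Finset.mem_range.1 hi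
    rw [Nat.descFactorial_eq_zero_iff_lt.2 (by omega : i < r), Nat.cast_zero, mul_zero]
  · have h0 : ∑ i ∈ Finset.Ico 0 r, (n.choose i : ℝ) * x^i * (1-x)^(n-i) * (i.descFactorial r : ℝ)
        = 0 := by
      apply Finset.sum_eq_zero
      intro i hi
      rw [Nat.descFactorial_eq_zero_iff_lt.2 (Finset.mem_Ico.1 hi).2, Nat.cast_zero, mul_zero]
    rw [Finset.range_eq_Ico, ← Finset.sum_Ico_consecutive _ (Nat.zero_le r) (by omega : r ≤ n+1),
      h0, zero_add, Finset.sum_Ico_eq_sum_range, show n + 1 - r = (n - r) + 1 by omega]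
    have h2 : ∀ j ∈ Finset.range ((n-r)+1),
        (n.choose (r+j) : ℝ) * x^(r+j) * (1-x)^(n-(r+j)) * ((r+j).descFactorial r : ℝ)
        = ((n.descFactorial r : ℝ) * x^r) * (((n-r).choose j : ℝ) * x^j * (1-x)^((n-r)-j)) := by
      intro j hj
      have hjn : j ≤ n - r := Nat.lt_succ_iff.1 (Finset.mem_range.1 hj)
      have key := choose_descFact (Nat.le_add_right r j) (by omega : r + j ≤ n)
      rw [show r + j - r = j by omega] at key
      have keyR : (n.choose (r+j) : ℝ) * ((r+j).descFactorial r : ℝ)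
          = (n.descFactorial r : ℝ) * ((n-r).choose j : ℝ) := by exact_mod_cast congrArg Nat.cast key
      rw [show n - (r+j) = (n-r) - j by omega]
      linear_combination (x^(r+j) * (1-x)^((n-r)-j)) * keyR
    rw [Finset.sum_congr rfl h2, ← Finset.mul_sum, binom_sum (n-r) x, mul_one]

lemma dF1 (i : ℕ) : (i.descFactorial 1 : ℝ) = i := by simp
lemma dF2 (i : ℕ) : (i.descFactorial 2 : ℝ) = (i:ℝ)^2 - i := by
  rcases i with _ | j
  · norm_num
  · simp [Nat.descFactorial, Nat.succ_sub_succ]; push_cast; ring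
lemma dF3 (i : ℕ) : (i.descFactorial 3 : ℝ) = (i:ℝ)^3 - 3*(i:ℝ)^2 + 2*i := by
  rcases i with _ | _ | j
  · norm_num
  · norm_num [Nat.descFactorial]
  · simp [Nat.descFactorial, Nat.succ_sub_succ]; push_cast; ring
lemma dF4 (i : ℕ) : (i.descFactorial 4 : ℝ) = (i:ℝ)^4 - 6*(i:ℝ)^3 + 11*(i:ℝ)^2 - 6*i := by
  rcases i with _ | _ | _ | j
  · norm_num
  · norm_num [Nat.descFactorial]
  · norm_num [Nat.descFactorial]
  · simp [Nat.descFactorial, Nat.succ_sub_succ]; push_cast; ring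

lemma cm1 (n : ℕ) (x : ℝ) :
    ∑ i ∈ Finset.range (n+1), (n.choose i : ℝ) * x^i * (1-x)^(n-i) * ((i:ℝ) - n*x) = 0 := by
  have F0 := fall_moment n 0 x
  have F1 := fall_moment n 1 x
  have hterm : ∀ i ∈ Finset.range (n+1),
      (n.choose i : ℝ) * x^i * (1-x)^(n-i) * ((i:ℝ) - n*x)
      = ((n.choose i : ℝ) * x^i * (1-x)^(n-i) * (i.descFactorial 1 : ℝ))
        + (-(n*x)) * ((n.choose i : ℝ) * x^i * (1-x)^(n-i) * (i.descFactorial 0 : ℝ)) := by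
    intro i _
    rw [dF1 i, Nat.descFactorial_zero, Nat.cast_one]
    ring
  rw [Finset.sum_congr rfl hterm, Finset.sum_add_distrib, ← Finset.mul_sum, F0, F1, dF1 n,
    Nat.descFactorial_zero, Nat.cast_one]
  ring

lemma cm2 (n : ℕ) (x : ℝ) :
    ∑ i ∈ Finset.range (n+1), (n.choose i : ℝ) * x^i * (1-x)^(n-i) * ((i:ℝ) - n*x)^2
      = n*x*(1-x) := by
  have F0 := fall_moment n 0 x
  have F1 := fall_moment n 1 x
  have F2 := fall_moment n 2 x
  have hterm : ∀ i ∈ Finset.range (n+1),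
      (n.choose i : ℝ) * x^i * (1-x)^(n-i) * ((i:ℝ) - n*x)^2
      = ((n.choose i : ℝ) * x^i * (1-x)^(n-i) * (i.descFactorial 2 : ℝ))
        + (1-2*(n*x)) * ((n.choose i : ℝ) * x^i * (1-x)^(n-i) * (i.descFactorial 1 : ℝ))
        + ((n*x)^2) * ((n.choose i : ℝ) * x^i * (1-x)^(n-i) * (i.descFactorial 0 : ℝ)) := by
    intro i _
    rw [dF2 i, dF1 i, Nat.descFactorial_zero, Nat.cast_one]
    ring
  rw [Finset.sum_congr rfl hterm]
  simp only [Finset.sum_add_distrib, ← Finset.mul_sum]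
  rw [F0, F1, F2, dF2 n, dF1 n, Nat.descFactorial_zero, Nat.cast_one]
  ring

lemma cm4 (n : ℕ) (x : ℝ) :
    ∑ i ∈ Finset.range (n+1), (n.choose i : ℝ) * x^i * (1-x)^(n-i) * ((i:ℝ) - n*x)^4
      = 3*n*(n-2)*(x*(1-x))^2 + n*(x*(1-x)) := by
  have F0 := fall_moment n 0 x
  have F1 := fall_moment n 1 x
  have F2 := fall_moment n 2 x
  have F3 := fall_moment n 3 x
  have F4 := fall_moment n 4 x
  have hterm : ∀ i ∈ Finset.range (n+1),
      (n.choose i : ℝ) * x^i * (1-x)^(n-i) * ((i:ℝ) - n*x)^4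
      = ((n.choose i : ℝ) * x^i * (1-x)^(n-i) * (i.descFactorial 4 : ℝ))
        + (6-4*(n*x)) * ((n.choose i : ℝ) * x^i * (1-x)^(n-i) * (i.descFactorial 3 : ℝ))
        + (7-12*(n*x)+6*(n*x)^2) * ((n.choose i : ℝ) * x^i * (1-x)^(n-i) * (i.descFactorial 2 : ℝ))
        + (1-4*(n*x)+6*(n*x)^2-4*(n*x)^3)
            * ((n.choose i : ℝ) * x^i * (1-x)^(n-i) * (i.descFactorial 1 : ℝ))
        + ((n*x)^4) * ((n.choose i : ℝ) * x^i * (1-x)^(n-i) * (i.descFactorial 0 : ℝ)) := by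
    intro i _
    rw [dF4 i, dF3 i, dF2 i, dF1 i, Nat.descFactorial_zero, Nat.cast_one]
    ring
  rw [Finset.sum_congr rfl hterm]
  simp only [Finset.sum_add_distrib, ← Finset.mul_sum]
  rw [F0, F1, F2, F3, F4, dF4 n, dF3 n, dF2 n, dF1 n, Nat.descFactorial_zero, Nat.cast_one]
  ring

lemma taylor2 (f f' : ℝ → ℝ) (f''x x : ℝ)
    (hderiv : ∀ᶠ y in nhds x, HasDerivAt f (f' y) y)
    (hderiv2 : HasDerivAt f' f''x x) :
    ∀ ε > 0, ε ≤ 1 → ∃ δ > (0:ℝ), ∀ y, |y - x| ≤ δ →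
      |f y - f x - f' x * (y - x) - f''x/2 * (y-x)^2| ≤ ε * (y-x)^2 := by
  intro ε hε _
  have hlo := (hasDerivAt_iff_isLittleO.1 hderiv2).def hε
  have hev := hlo.and hderiv
  rw [Metric.eventually_nhds_iff] at hev
  obtain ⟨δ, hδ, H⟩ := hev
  refine ⟨δ/2, by linarith, fun y hy => ?_⟩
  have habs : ∀ t ∈ uIcc x y, |t - x| ≤ |y - x| := by
    intro t ht
    rcases Set.mem_uIcc.1 ht with ⟨h1, h2⟩ | ⟨h1, h2⟩
    · rw [abs_of_nonneg (by linarith), abs_of_nonneg (by linarith)]; linarith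
    · rw [abs_of_nonpos (by linarith), abs_of_nonpos (by linarith)]; linarith
  have hmem : ∀ t ∈ uIcc x y, dist t x < δ := by
    intro t ht
    rw [Real.dist_eq]
    calc |t - x| ≤ |y - x| := habs t ht
    _ ≤ δ/2 := hy
    _ < δ := by linarith
  have hR : ∀ t ∈ uIcc x y,
      HasDerivWithinAt (fun s => f s - f x - f' x * (s - x) - f''x/2 * (s-x)^2)
        (f' t - f' x - f''x * (t - x)) (uIcc x y) t := by
    intro t ht
    have hdf : HasDerivAt f (f' t) t := (H (hmem t ht)).2
    have h1 : HasDerivAt (fun s : ℝ => f' x * (s - x)) (f' x) t := by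
      simpa using ((hasDerivAt_id t).sub_const x).const_mul (f' x)
    have h2 : HasDerivAt (fun s : ℝ => f''x/2 * (s - x)^2) (f''x * (t - x)) t := by
      have := (((hasDerivAt_id t).sub_const x).pow 2).const_mul (f''x/2)
      exact this.congr_deriv (by simp; ring)
    exact (((hdf.sub_const (f x)).sub h1).sub h2).hasDerivWithinAt
  have hbound : ∀ t ∈ uIcc x y, ‖f' t - f' x - f''x * (t - x)‖ ≤ ε * |y - x| := by
    intro t ht
    have h := (H (hmem t ht)).1
    simp only [smul_eq_mul, Real.norm_eq_abs] at h ⊢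
    calc |f' t - f' x - f''x * (t - x)| = |f' t - f' x - (t - x) * f''x| := by ring_nf
    _ ≤ ε * |t - x| := h
    _ ≤ ε * |y - x| := by
        have := habs t ht
        nlinarith
  have key := (convex_uIcc x y).norm_image_sub_le_of_norm_hasDerivWithin_le hR hbound
    (left_mem_uIcc) (right_mem_uIcc)
  simp only [Real.norm_eq_abs] at key
  have : |f y - f x - f' x * (y - x) - f''x/2 * (y-x)^2 - 0| ≤ ε * |y - x| * |y - x| := by
    convert key using 2
    ring
  rw [sub_zero] at this
  calc |f y - f x - f' x * (y - x) - f''x/2 * (y-x)^2| ≤ ε * |y - x| * |y - x| := this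
  _ = ε * (y - x)^2 := by rw [mul_assoc, abs_mul_abs_self]; ring

lemma C4bound (N q : ℝ) (hN : 1 ≤ N) (hq0 : 0 ≤ q) (hq : q ≤ 1/4) :
    3*N*(N-2)*q^2 + N*q ≤ N^2 := by
  have h3 : (0:ℝ) ≤ 1 - 3*q^2 := by nlinarith
  have t1 : (0:ℝ) ≤ N * ((N-1) * (1-3*q^2)) :=
    mul_nonneg (by linarith) (mul_nonneg (by linarith) h3)
  have t2 : (0:ℝ) ≤ N * (q-1/6)^2 := mul_nonneg (by linarith) (sq_nonneg _)
  nlinarith [t1, t2]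

set_option maxHeartbeats 1600000 in
lemma main_est (f f' : ℝ → ℝ) (f''x x M K δ ε : ℝ) (n : ℕ)
    (hx0 : 0 ≤ x) (hx1 : x ≤ 1) (hn : 1 ≤ n)
    (hδ : 0 < δ) (hε : 0 < ε) (hK : 0 < K)
    (hRK : ∀ y ∈ Icc (0:ℝ) 1, |f y - f x - f' x*(y-x) - f''x/2*(y-x)^2| ≤ K)
    (hRδ : ∀ y, |y - x| ≤ δ → |f y - f x - f' x*(y-x) - f''x/2*(y-x)^2| ≤ ε*(y-x)^2) :
    |(n:ℝ) * ((∑ i ∈ Finset.range (n+1), (n.choose i:ℝ) * f ((i:ℝ)/n) * x^i * (1-x)^(n-i)) - f x)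
      - x*(1-x)*f''x/2| ≤ ε + K/(δ^4 * n) := by
  have hN : (0:ℝ) < n := by exact_mod_cast hn
  have hN1 : (1:ℝ) ≤ n := by exact_mod_cast hn
  set N : ℝ := (n:ℝ) with hNdef
  set R : ℝ → ℝ := fun y => f y - f x - f' x*(y-x) - f''x/2*(y-x)^2 with hRdef
  set P : ℕ → ℝ := fun i => (n.choose i : ℝ) * x^i * (1-x)^(n-i) with hPdef
  have hPnn : ∀ i, 0 ≤ P i := fun i =>
    mul_nonneg (mul_nonneg (Nat.cast_nonneg _) (pow_nonneg hx0 _)) (pow_nonneg (by linarith) _)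
  -- step A : rewrite difference as N * ∑ P i * R (i/N)
  have stepA : N * ((∑ i ∈ Finset.range (n+1),
        (n.choose i:ℝ) * f ((i:ℝ)/n) * x^i * (1-x)^(n-i)) - f x) - x*(1-x)*f''x/2
      = N * ∑ i ∈ Finset.range (n+1), P i * R ((i:ℝ)/N) := by
    have e1 : ∑ i ∈ Finset.range (n+1), (n.choose i:ℝ) * f ((i:ℝ)/n) * x^i * (1-x)^(n-i)
        = ∑ i ∈ Finset.range (n+1), P i * f ((i:ℝ)/N) :=
      Finset.sum_congr rfl fun i _ => by simp only [hPdef]; ring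
    have e2 : f x = ∑ i ∈ Finset.range (n+1), P i * f x := by
      rw [← Finset.sum_mul, binom_sum n x, one_mul]
    have e3 : ∀ i ∈ Finset.range (n+1), P i * f ((i:ℝ)/N) - P i * f x
        = f' x * ((1/N) * (P i * ((i:ℝ) - N*x)))
          + (f''x/2) * ((1/N^2) * (P i * ((i:ℝ) - N*x)^2))
          + P i * R ((i:ℝ)/N) := by
      intro i _
      simp only [hRdef]
      field_simp
      ring
    rw [e1]
    nth_rewrite 1 [e2]
    rw [← Finset.sum_sub_distrib, Finset.sum_congr rfl e3]
    simp only [Finset.sum_add_distrib, ← Finset.mul_sum]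
    rw [cm1 n x, cm2 n x]
    field_simp
    ring
  rw [stepA]
  -- step B : termwise bound
  have hNne : N ≠ 0 := hN.ne'
  have hδne : δ ≠ 0 := hδ.ne'
  have hterm : ∀ i ∈ Finset.range (n+1), |P i * R ((i:ℝ)/N)|
      ≤ ε * (P i * ((i:ℝ)/N - x)^2) + (K/δ^4) * (P i * ((i:ℝ)/N - x)^4) := by
    intro i hi
    have hin : (i:ℝ) ≤ N := by
      rw [hNdef]; exact_mod_cast Nat.lt_succ_iff.1 (Finset.mem_range.1 hi)
    have hy0 : 0 ≤ (i:ℝ)/N := div_nonneg (Nat.cast_nonneg _) hN.le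
    have hy1 : (i:ℝ)/N ≤ 1 := (div_le_one hN).2 hin
    rw [abs_mul, abs_of_nonneg (hPnn i)]
    rcases le_or_gt |(i:ℝ)/N - x| δ with hc | hc
    · have h1 := hRδ ((i:ℝ)/N) hc
      have h2 : 0 ≤ (K/δ^4) * (P i * ((i:ℝ)/N - x)^4) :=
        mul_nonneg (div_nonneg hK.le (by positivity)) (mul_nonneg (hPnn i) (by positivity))
      nlinarith [hPnn i, mul_le_mul_of_nonneg_left h1 (hPnn i)]
    · have h1 := hRK ((i:ℝ)/N) ⟨hy0, hy1⟩
      have h4 : δ^4 ≤ ((i:ℝ)/N - x)^4 := by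
        calc δ^4 = |δ|^4 := by rw [abs_of_pos hδ]
        _ ≤ |(i:ℝ)/N - x|^4 := by
            apply pow_le_pow_left₀ (abs_nonneg _) (by rw [abs_of_pos hδ]; exact hc.le)
        _ = ((i:ℝ)/N - x)^4 := by rw [← abs_pow, abs_of_nonneg (by positivity)]
      have h5 : |R ((i:ℝ)/N)| ≤ (K/δ^4) * ((i:ℝ)/N - x)^4 := by
        calc |R ((i:ℝ)/N)| ≤ K := h1
        _ = (K/δ^4) * δ^4 := by field_simp
        _ ≤ (K/δ^4) * ((i:ℝ)/N - x)^4 :=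
            mul_le_mul_of_nonneg_left h4 (div_nonneg hK.le (by positivity))
      have h6 : 0 ≤ ε * (P i * ((i:ℝ)/N - x)^2) :=
        mul_nonneg hε.le (mul_nonneg (hPnn i) (by positivity))
      nlinarith [mul_le_mul_of_nonneg_left h5 (hPnn i)]
  -- sums of squares and fourth powers
  have hS2 : ∑ i ∈ Finset.range (n+1), P i * ((i:ℝ)/N - x)^2 = x*(1-x)/N := by
    have e : ∀ i ∈ Finset.range (n+1), P i * ((i:ℝ)/N - x)^2
        = (1/N^2) * (P i * ((i:ℝ) - N*x)^2) := by
      intro i _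
      field_simp
      try ring
    rw [Finset.sum_congr rfl e, ← Finset.mul_sum, cm2 n x]
    field_simp
    try ring
  have hS4 : ∑ i ∈ Finset.range (n+1), P i * ((i:ℝ)/N - x)^4 ≤ 1/N^2 := by
    have e : ∀ i ∈ Finset.range (n+1), P i * ((i:ℝ)/N - x)^4
        = (1/N^4) * (P i * ((i:ℝ) - N*x)^4) := by
      intro i _
      field_simp
      try ring
    rw [Finset.sum_congr rfl e, ← Finset.mul_sum, cm4 n x]
    have hq0 : 0 ≤ x*(1-x) := mul_nonneg hx0 (by linarith)
    have hq : x*(1-x) ≤ 1/4 := by nlinarith [sq_nonneg (x - 1/2)]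
    have hb := C4bound N (x*(1-x)) hN1 hq0 hq
    show (1/N^4) * (3*N*(N-2)*(x*(1-x))^2 + N*(x*(1-x))) ≤ 1/N^2
    calc (1/N^4) * (3*N*(N-2)*(x*(1-x))^2 + N*(x*(1-x))) ≤ (1/N^4) * N^2 :=
        mul_le_mul_of_nonneg_left hb (by positivity)
    _ = 1/N^2 := by field_simp
  -- combine
  have habs : |N * ∑ i ∈ Finset.range (n+1), P i * R ((i:ℝ)/N)|
      ≤ N * ∑ i ∈ Finset.range (n+1), |P i * R ((i:ℝ)/N)| := by
    rw [abs_mul, abs_of_pos hN]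
    exact mul_le_mul_of_nonneg_left (Finset.abs_sum_le_sum_abs _ _) hN.le
  have hsum : ∑ i ∈ Finset.range (n+1), |P i * R ((i:ℝ)/N)|
      ≤ ε * (x*(1-x)/N) + (K/δ^4) * (1/N^2) := by
    calc ∑ i ∈ Finset.range (n+1), |P i * R ((i:ℝ)/N)|
        ≤ ∑ i ∈ Finset.range (n+1),
          (ε * (P i * ((i:ℝ)/N - x)^2) + (K/δ^4) * (P i * ((i:ℝ)/N - x)^4)) :=
        Finset.sum_le_sum hterm
    _ = ε * (∑ i ∈ Finset.range (n+1), P i * ((i:ℝ)/N - x)^2)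
        + (K/δ^4) * (∑ i ∈ Finset.range (n+1), P i * ((i:ℝ)/N - x)^4) := by
        rw [Finset.sum_add_distrib, Finset.mul_sum, Finset.mul_sum]
    _ ≤ ε * (x*(1-x)/N) + (K/δ^4) * (1/N^2) := by
        apply add_le_add
        · rw [hS2]
        · exact mul_le_mul_of_nonneg_left hS4 (by positivity)
  calc |N * ∑ i ∈ Finset.range (n+1), P i * R ((i:ℝ)/N)|
      ≤ N * (ε * (x*(1-x)/N) + (K/δ^4) * (1/N^2)) :=
      habs.trans (mul_le_mul_of_nonneg_left hsum hN.le)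
  _ = ε * (x*(1-x)) + K/(δ^4 * N) := by field_simp
  _ ≤ ε + K/(δ^4 * N) := by
      have h1 : x*(1-x) ≤ 1 := by nlinarith
      nlinarith [mul_le_mul_of_nonneg_left h1 hε.le]

/-- Voronovskaya's theorem: if `f` is bounded on `[0,1]`, differentiable in a
neighborhood of `x` with derivative `f'`, and `f'` has derivative `f''x` at `x`,
then `n · (Bₙ(f,x) − f(x)) → x(1−x) f''(x)/2`. -/
theorem stmt_3 (f f' : ℝ → ℝ) (f''x : ℝ) (x : ℝ)
    (hx : x ∈ Icc (0:ℝ) 1)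
    (hbdd : ∃ M, ∀ y ∈ Icc (0:ℝ) 1, |f y| ≤ M)
    (hderiv : ∀ᶠ y in nhds x, HasDerivAt f (f' y) y)
    (hderiv2 : HasDerivAt f' f''x x) :
    Tendsto
      (fun n : ℕ =>
        (n : ℝ) *
          ((∑ i ∈ Finset.range (n + 1),
              (n.choose i : ℝ) * f ((i : ℝ) / n) * x ^ i * (1 - x) ^ (n - i)) - f x))
      atTop (nhds (x * (1 - x) * f''x / 2)) := by
  obtain ⟨hx0, hx1⟩ := hx
  obtain ⟨M, hM⟩ := hbdd
  have hMnn : 0 ≤ M := (abs_nonneg _).trans (hM x ⟨hx0, hx1⟩)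
  set K := M + |f x| + |f' x| + |f''x|/2 + 1 with hKdef
  have hK : 0 < K := by
    have := abs_nonneg (f x); have := abs_nonneg (f' x); have := abs_nonneg f''x
    rw [hKdef]; linarith
  have hRK : ∀ y ∈ Icc (0:ℝ) 1, |f y - f x - f' x*(y-x) - f''x/2*(y-x)^2| ≤ K := by
    rintro y ⟨hy0, hy1⟩
    have h1 := hM y ⟨hy0, hy1⟩
    have h2 : |y - x| ≤ 1 := abs_le.2 ⟨by linarith, by linarith⟩
    have e1 : |f' x * (y-x)| ≤ |f' x| := by
      rw [abs_mul]
      nlinarith [abs_nonneg (f' x), abs_nonneg (y - x)]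
    have e2 : |f''x/2 * (y-x)^2| ≤ |f''x|/2 := by
      rw [abs_mul, abs_div]
      have h3 : |(y-x)^2| ≤ 1 := by
        rw [abs_pow, ← one_pow 2]
        exact pow_le_pow_left₀ (abs_nonneg _) h2 2
      have h4 : (0:ℝ) ≤ |f''x|/2 := by positivity
      calc |f''x|/|2| * |(y-x)^2| ≤ |f''x|/|2| * 1 := by
            apply mul_le_mul_of_nonneg_left h3 (by positivity)
      _ = |f''x|/2 := by norm_num
    calc |f y - f x - f' x*(y-x) - f''x/2*(y-x)^2|
        ≤ |f y - f x - f' x*(y-x)| + |f''x/2*(y-x)^2| := abs_sub _ _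
    _ ≤ (|f y - f x| + |f' x*(y-x)|) + |f''x/2*(y-x)^2| := by
        have := abs_sub (f y - f x) (f' x*(y-x)); linarith
    _ ≤ (|f y| + |f x| + |f' x*(y-x)|) + |f''x/2*(y-x)^2| := by
        have := abs_sub (f y) (f x); linarith
    _ ≤ K := by rw [hKdef]; linarith
  have htay := taylor2 f f' f''x x hderiv hderiv2
  rw [Metric.tendsto_atTop]
  intro ε' hε'
  have hεpos : 0 < min (ε'/2) 1 := lt_min (by linarith) one_pos
  obtain ⟨δ, hδ, hRδ⟩ := htay (min (ε'/2) 1) hεpos (min_le_right _ _)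
  set C := K/δ^4 with hCdef
  have hCpos : 0 < C := by rw [hCdef]; positivity
  obtain ⟨N₀, hN₀⟩ := exists_nat_gt (2*C/ε')
  refine ⟨max N₀ 1, fun n hn => ?_⟩
  have hn1 : 1 ≤ n := le_trans (le_max_right _ _) hn
  have hnN : (N₀:ℝ) ≤ n := by exact_mod_cast le_trans (le_max_left _ _) hn
  have hnpos : (0:ℝ) < n := by exact_mod_cast hn1
  have est := main_est f f' f''x x M K δ (min (ε'/2) 1) n hx0 hx1 hn1 hδ hεpos hK hRK hRδ
  have hCn : C/(n:ℝ) < ε'/2 := by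
    have hgt : 2*C/ε' < (n:ℝ) := lt_of_lt_of_le hN₀ hnN
    rw [div_lt_iff₀ hnpos]
    rw [div_lt_iff₀ hε'] at hgt
    nlinarith
  rw [Real.dist_eq]
  calc |(n:ℝ) * ((∑ i ∈ Finset.range (n + 1),
          (n.choose i : ℝ) * f ((i : ℝ) / n) * x ^ i * (1 - x) ^ (n - i)) - f x)
        - x * (1 - x) * f''x / 2|
      ≤ min (ε'/2) 1 + K/(δ^4 * n) := est
  _ = min (ε'/2) 1 + C/(n:ℝ) := by rw [hCdef, div_div]
  _ < ε'/2 + ε'/2 := by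
      have := min_le_left (ε'/2) 1
      linarith
  _ = ε' := by ring
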